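/- Let J be an n_L×N real matrix such that JJᵀ is invertible, M a P×P symmetric positive definite real matrix, and R a P×N real matrix satisfying Rᵀ M⁻² R = I (the N×N identity). For an output error δ ∈ ℝ^{n_L}, define x* := M⁻² R Jᵀ (JJᵀ)⁻¹ δ. Then J Rᵀ x* = δ, and for every x ∈ ℝ^P with J Rᵀ x = δ one has ‖M x*‖₂ ≤ ‖M x‖₂, with equality if and only if x = x*. (Theorem 2: the DFC steady-state weight update is the weighted minimum-norm update of the network weights that makes the linearized feedforward output reach its target.) -/
import Mathlib

open Matrix

/-- The Euclidean (`L²`) norm on `ℝ^n`. -/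
noncomputable def euclideanNorm {n : Type*} [Fintype n] (x : n → ℝ) : ℝ :=
  Real.sqrt (∑ i, x i ^ 2)

lemma euclideanNorm_eq_sqrt_dot {n : Type*} [Fintype n] (x : n → ℝ) :
    euclideanNorm x = Real.sqrt (x ⬝ᵥ x) := by
  simp [euclideanNorm, dotProduct, sq]

lemma dot_mulVec_left {m n : Type*} [Fintype m] [Fintype n]
    (A : Matrix m n ℝ) (u : n → ℝ) (z : m → ℝ) :
    (A *ᵥ u) ⬝ᵥ z = u ⬝ᵥ (Aᵀ *ᵥ z) := by
  rw [dotProduct_comm, Matrix.dotProduct_mulVec, Matrix.mulVec_transpose,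
    dotProduct_comm]

theorem dfc_weighted_minimum_norm_updates {nL N P : ℕ}
    (J : Matrix (Fin nL) (Fin N) ℝ) (M : Matrix (Fin P) (Fin P) ℝ)
    (R : Matrix (Fin P) (Fin N) ℝ)
    (hJJ : IsUnit (J * Jᵀ)) (hM : M.PosDef)
    (hR : Rᵀ * (M⁻¹ * M⁻¹) * R = (1 : Matrix (Fin N) (Fin N) ℝ))
    (δ : Fin nL → ℝ) :
    let x := ((M⁻¹ * M⁻¹) * R * Jᵀ * (J * Jᵀ)⁻¹) *ᵥ δ
    (J * Rᵀ) *ᵥ x = δ ∧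
      ∀ y : Fin P → ℝ, (J * Rᵀ) *ᵥ y = δ →
        euclideanNorm (M *ᵥ x) ≤ euclideanNorm (M *ᵥ y) ∧
          (euclideanNorm (M *ᵥ x) = euclideanNorm (M *ᵥ y) ↔ y = x) := by
  intro x
  have hMdet : M.det ≠ 0 := hM.det_pos.ne'
  have hMT : Mᵀ = M := hM.1
  have hMiT : (M⁻¹)ᵀ = M⁻¹ := by rw [Matrix.transpose_nonsing_inv, hMT]
  have hMMi : M * M⁻¹ = 1 := Matrix.mul_nonsing_inv M (isUnit_iff_ne_zero.mpr hMdet)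
  have hMiM : M⁻¹ * M = 1 := Matrix.nonsing_inv_mul M (isUnit_iff_ne_zero.mpr hMdet)
  have hJdet : (J * Jᵀ).det ≠ 0 := ((Matrix.isUnit_iff_isUnit_det _).mp hJJ).ne_zero
  have hJJinv : (J * Jᵀ) * (J * Jᵀ)⁻¹ = 1 := Matrix.mul_nonsing_inv _ (isUnit_iff_ne_zero.mpr hJdet)
  -- main matrix identity for the constraint
  have hkey : (J * Rᵀ) * ((M⁻¹ * M⁻¹) * R * Jᵀ * (J * Jᵀ)⁻¹) = 1 := by
    have : (J * Rᵀ) * ((M⁻¹ * M⁻¹) * R * Jᵀ * (J * Jᵀ)⁻¹)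
        = J * (Rᵀ * (M⁻¹ * M⁻¹) * R) * Jᵀ * (J * Jᵀ)⁻¹ := by simp only [Matrix.mul_assoc]
    rw [this, hR, Matrix.mul_one, hJJinv]
  have hcon : (J * Rᵀ) *ᵥ x = δ := by
    show (J * Rᵀ) *ᵥ (((M⁻¹ * M⁻¹) * R * Jᵀ * (J * Jᵀ)⁻¹) *ᵥ δ) = δ
    rw [Matrix.mulVec_mulVec, hkey, Matrix.one_mulVec]
  refine ⟨hcon, ?_⟩
  intro y hy
  set c : Fin nL → ℝ := (J * Jᵀ)⁻¹ *ᵥ δ with hc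
  set A : Matrix (Fin P) (Fin nL) ℝ := M⁻¹ * R * Jᵀ with hA
  have hAT : Aᵀ = J * Rᵀ * M⁻¹ := by
    simp [hA, Matrix.transpose_mul, hMiT, Matrix.mul_assoc]
  have hw : M *ᵥ x = A *ᵥ c := by
    show M *ᵥ (((M⁻¹ * M⁻¹) * R * Jᵀ * (J * Jᵀ)⁻¹) *ᵥ δ) = A *ᵥ ((J * Jᵀ)⁻¹ *ᵥ δ)
    rw [Matrix.mulVec_mulVec, Matrix.mulVec_mulVec]
    have hAA : M * (M⁻¹ * M⁻¹ * R * Jᵀ * (J * Jᵀ)⁻¹) = A * (J * Jᵀ)⁻¹ := by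
      rw [hA]
      calc M * (M⁻¹ * M⁻¹ * R * Jᵀ * (J * Jᵀ)⁻¹)
          = (M * M⁻¹) * (M⁻¹ * R * Jᵀ * (J * Jᵀ)⁻¹) := by
            simp only [Matrix.mul_assoc]
        _ = M⁻¹ * R * Jᵀ * (J * Jᵀ)⁻¹ := by rw [hMMi, Matrix.one_mul]
        _ = (M⁻¹ * R * Jᵀ) * (J * Jᵀ)⁻¹ := by simp only [Matrix.mul_assoc]
    rw [hAA]
  set w : Fin P → ℝ := M *ᵥ x with hwdef
  set v : Fin P → ℝ := M *ᵥ y with hvdef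
  -- w ⬝ᵥ v = c ⬝ᵥ δ
  have hwv : w ⬝ᵥ v = c ⬝ᵥ δ := by
    rw [hw, dot_mulVec_left, hAT, hvdef, Matrix.mulVec_mulVec]
    have : J * Rᵀ * M⁻¹ * M = J * Rᵀ := by
      rw [Matrix.mul_assoc, hMiM, Matrix.mul_one]
    rw [this, hy]
  -- w ⬝ᵥ w = c ⬝ᵥ δ
  have hww : w ⬝ᵥ w = c ⬝ᵥ δ := by
    rw [hw, dot_mulVec_left, Matrix.mulVec_mulVec]
    have hAtA : Aᵀ * A = J * Jᵀ := by
      rw [hAT, hA]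
      calc J * Rᵀ * M⁻¹ * (M⁻¹ * R * Jᵀ)
          = J * (Rᵀ * (M⁻¹ * M⁻¹) * R) * Jᵀ := by simp only [Matrix.mul_assoc]
        _ = J * Jᵀ := by rw [hR, Matrix.mul_one]
    rw [hAtA, hc, Matrix.mulVec_mulVec, hJJinv, Matrix.one_mulVec]
  have horth : w ⬝ᵥ v = w ⬝ᵥ w := by rw [hwv, hww]
  -- pythagoras
  have hpyth : v ⬝ᵥ v = w ⬝ᵥ w + (v - w) ⬝ᵥ (v - w) := by
    have h1 : (v - w) ⬝ᵥ (v - w) = v ⬝ᵥ v - v ⬝ᵥ w - (w ⬝ᵥ v - w ⬝ᵥ w) := by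
      have h2 : v ⬝ᵥ w = w ⬝ᵥ v := dotProduct_comm v w
      simp [sub_dotProduct, dotProduct_sub]
      linarith
    have h2 : v ⬝ᵥ w = w ⬝ᵥ v := dotProduct_comm v w
    rw [h1, h2, horth]; ring
  have hdnonneg : ∀ u : Fin P → ℝ, 0 ≤ u ⬝ᵥ u := by
    intro u
    exact Finset.sum_nonneg fun i _ => mul_self_nonneg (u i)
  have hle : w ⬝ᵥ w ≤ v ⬝ᵥ v := by
    rw [hpyth]; linarith [hdnonneg (v - w)]
  constructor
  · rw [euclideanNorm_eq_sqrt_dot, euclideanNorm_eq_sqrt_dot]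
    exact Real.sqrt_le_sqrt hle
  · constructor
    · intro heq
      rw [euclideanNorm_eq_sqrt_dot, euclideanNorm_eq_sqrt_dot] at heq
      have h0 : w ⬝ᵥ w = v ⬝ᵥ v := by
        exact (Real.sqrt_inj (hdnonneg w) (hdnonneg v)).mp heq
      have hd0 : (v - w) ⬝ᵥ (v - w) = 0 := by rw [hpyth] at h0; linarith
      have hvw : v = w := by
        have : ∀ i, (v - w) i = 0 := by
          intro i
          have := (Finset.sum_eq_zero_iff_of_nonneg
            (fun j _ => mul_self_nonneg ((v - w) j))).mp hd0 i (Finset.mem_univ i)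
          exact mul_self_eq_zero.mp this
        funext i
        have := this i
        simpa [sub_eq_zero] using this
      -- v = w means M *ᵥ y = M *ᵥ x, so y = x
      have : M *ᵥ y = M *ᵥ x := hvw
      have := congrArg (fun z => M⁻¹ *ᵥ z) this
      simpa [Matrix.mulVec_mulVec, hMiM, Matrix.one_mulVec] using this
    · intro heq; rw [hwdef, hvdef, heq]
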